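/- Let R be an irreducible reduced root system with base S and set of positive roots R⁺, and let μ be a nonzero element of the coweight space satisfying ⟨α, μ⟩ ≥ 0 for all α ∈ S and ⟨α, μ⟩ ∈ {−1, 0, 1} for all α ∈ R. Then there is exactly one simple root α_s ∈ S with ⟨α_s, μ⟩ = 1 (and ⟨α, μ⟩ = 0 for all other α ∈ S), the highest root α̃ satisfies ⟨α̃, μ⟩ = 1, and the coefficient n_{α_s} of α_s in α̃ = Σ n_α α equals 1. -/

import Mathlib

variable {V : Type*} [NormedAddCommGroup V] [InnerProductSpace ℝ V]

/-- A (crystallographic, reduced) root system in a real inner product space. -/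
def IsRootSystem (R : Finset V) : Prop :=
  (0 : V) ∉ R ∧
  Submodule.span ℝ (R : Set V) = ⊤ ∧
  (∀ α ∈ R, ∀ β ∈ R,
    β - (2 * (inner ℝ β α : ℝ) / (inner ℝ α α : ℝ)) • α ∈ R) ∧
  (∀ α ∈ R, ∀ β ∈ R, ∃ z : ℤ, 2 * (inner ℝ β α : ℝ) / (inner ℝ α α : ℝ) = (z : ℝ)) ∧
  (∀ α ∈ R, ∀ t : ℝ, t • α ∈ R → t = 1 ∨ t = -1)

/-- `S` is a base (set of simple roots) of the root system `R`. -/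
def IsBase (R S : Finset V) : Prop :=
  S ⊆ R ∧ LinearIndependent ℝ (fun x : (S : Set V) => (x : V)) ∧
  ∀ β ∈ R, (∃ m : V → ℕ, β = ∑ α ∈ S, (m α : ℝ) • α) ∨
    (∃ m : V → ℕ, β = -(∑ α ∈ S, (m α : ℝ) • α))

/-- Irreducibility: `R` admits no partition into two nonempty mutually orthogonal
subsets. -/
def IsIrreducibleRS (R : Finset V) : Prop :=
  ∀ R₁ R₂ : Finset V, (R₁ : Set V) ∪ (R₂ : Set V) = (R : Set V) →
    (∀ α ∈ R₁, ∀ β ∈ R₂, (inner ℝ α β : ℝ) = 0) → R₁ = ∅ ∨ R₂ = ∅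

/-- Let `μ` be a nonzero coweight with `⟨α, μ⟩ ≥ 0` for all simple `α` and
`⟨α, μ⟩ ∈ {−1,0,1}` for all roots `α`. Then there is exactly one simple root `α_s`
with `⟨α_s, μ⟩ = 1` (all other simple roots pairing to `0`), the highest root `α̃`
satisfies `⟨α̃, μ⟩ = 1`, and the coefficient of `α_s` in `α̃` equals `1`. -/
theorem stmt15 (R S : Finset V)
    (hR : IsRootSystem R) (hirr : IsIrreducibleRS R) (hS : IsBase R S)
    (μ : V →ₗ[ℝ] ℝ) (hμ0 : μ ≠ 0)
    (hpos : ∀ α ∈ S, 0 ≤ μ α)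
    (hval : ∀ α ∈ R, μ α = -1 ∨ μ α = 0 ∨ μ α = 1)
    (αt : V) (hαt : αt ∈ R) (n : V → ℕ) (hαtn : αt = ∑ α ∈ S, (n α : ℝ) • α)
    (hn1 : ∀ α ∈ S, 1 ≤ n α)
    (hmax : ∀ β ∈ R, ∃ c : V → ℝ, (∀ α ∈ S, 0 ≤ c α) ∧ αt - β = ∑ α ∈ S, c α • α) :
    (∃! αs : V, αs ∈ S ∧ μ αs = 1) ∧
    (∀ α ∈ S, μ α = 0 ∨ μ α = 1) ∧
    μ αt = 1 ∧
    (∀ αs ∈ S, μ αs = 1 → n αs = 1) := by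
  classical
  obtain ⟨hSR, hlin, hdec⟩ := hS
  have hA : ∀ α ∈ S, μ α = 0 ∨ μ α = 1 := by
    intro α hα
    rcases hval α (hSR hα) with h | h | h
    · exfalso; have := hpos α hα; linarith
    · exact Or.inl h
    · exact Or.inr h
  have hsum : μ αt = ∑ α ∈ S, (n α : ℝ) * μ α := by
    rw [hαtn, map_sum]
    simp [map_smul]
  have hterm0 : ∀ α ∈ S, 0 ≤ (n α : ℝ) * μ α := fun α hα =>
    mul_nonneg (by positivity) (hpos α hα)
  have hC : ∃ α0, α0 ∈ S ∧ μ α0 = 1 := by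
    by_contra h
    push_neg at h
    have hz : ∀ α ∈ S, μ α = 0 := by
      intro α hα
      rcases hA α hα with h0 | h1
      · exact h0
      · exact absurd h1 (h α hα)
    apply hμ0
    apply LinearMap.ext_on (s := (R : Set V)) hR.2.1
    intro x hx
    rcases hdec x hx with ⟨m, hm⟩ | ⟨m, hm⟩
    · rw [hm, map_sum]
      simp only [map_smul, smul_eq_mul, LinearMap.zero_apply]
      exact Finset.sum_eq_zero fun α hα => by rw [hz α hα, mul_zero]
    · rw [hm, map_neg, map_sum]
      simp only [map_smul, smul_eq_mul, LinearMap.zero_apply, neg_eq_zero]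
      exact Finset.sum_eq_zero fun α hα => by rw [hz α hα, mul_zero]
  obtain ⟨α0, hα0S, hα01⟩ := hC
  have h1le : (1 : ℝ) ≤ μ αt := by
    rw [hsum]
    calc (1 : ℝ) ≤ (n α0 : ℝ) * μ α0 := by
          rw [hα01, mul_one]; exact_mod_cast hn1 α0 hα0S
      _ ≤ ∑ α ∈ S, (n α : ℝ) * μ α := Finset.single_le_sum hterm0 hα0S
  have hαt1 : μ αt = 1 := by
    rcases hval αt hαt with h | h | h <;> linarith
  have hsum1 : ∑ α ∈ S, (n α : ℝ) * μ α = 1 := by rw [← hsum, hαt1]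
  have huniq : ∀ β ∈ S, μ β = 1 → β = α0 := by
    intro β hβS hβ1
    by_contra hne
    have hβe : β ∈ S.erase α0 := Finset.mem_erase.mpr ⟨hne, hβS⟩
    have h1 : (1 : ℝ) ≤ (n β : ℝ) * μ β := by
      rw [hβ1, mul_one]; exact_mod_cast hn1 β hβS
    have h2 : (n β : ℝ) * μ β ≤ ∑ α ∈ S.erase α0, (n α : ℝ) * μ α :=
      Finset.single_le_sum (fun α hα => hterm0 α (Finset.mem_of_mem_erase hα)) hβe
    have h3 : (n α0 : ℝ) * μ α0 + ∑ α ∈ S.erase α0, (n α : ℝ) * μ α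
        = ∑ α ∈ S, (n α : ℝ) * μ α := Finset.add_sum_erase S (fun α => (n α : ℝ) * μ α) hα0S
    have h4 : (1 : ℝ) ≤ (n α0 : ℝ) * μ α0 := by
      rw [hα01, mul_one]; exact_mod_cast hn1 α0 hα0S
    linarith
  have hcoef : ∀ αs ∈ S, μ αs = 1 → n αs = 1 := by
    intro αs hαsS hαs1
    have hle : (n αs : ℝ) * μ αs ≤ 1 := by
      rw [← hsum1]
      exact Finset.single_le_sum hterm0 hαsS
    rw [hαs1, mul_one] at hle
    have := hn1 αs hαsS
    have : (n αs : ℝ) ≥ 1 := by exact_mod_cast this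
    have : (n αs : ℝ) = 1 := le_antisymm hle this
    exact_mod_cast this
  exact ⟨⟨α0, ⟨hα0S, hα01⟩, fun y ⟨hyS, hy1⟩ => huniq y hyS hy1⟩, hA, hαt1, hcoef⟩
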